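/- Let a_1,…,a_n be real numbers with a_i > 1 and ∑_{i=1}^n 1/a_i = 1, let d_1 > 0 and d_2 be real numbers, and define f_i(x) = a_i x + d_1 a_i ∑_{j < i} 1/a_j + d_2(a_i − 1) for i = 1,…,n. Then f_1,…,f_n freely generate a free semigroup under composition: for any two distinct nonempty finite words w, w' over {1,…,n}, the compositions f_w and f_{w'} are distinct functions. -/

import Mathlib

private theorem free_key_aux (n : ℕ) (a : Fin n → ℝ) (ha : ∀ i, 1 < a i)
    (hsum : ∑ i, 1 / a i = 1) (d₁ d₂ : ℝ) (hd₁ : 0 < d₁) :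
    ∀ v v' : List (Fin n),
      (∀ y, v.foldr (fun i y => (y + d₂) / a i - d₁ * (∑ j ∈ Finset.Iio i, 1 / a j) - d₂) y
          = v'.foldr (fun i y => (y + d₂) / a i - d₁ * (∑ j ∈ Finset.Iio i, 1 / a j) - d₂) y)
      → v = v' := by
  set H : Fin n → ℝ → ℝ :=
    fun i y => (y + d₂) / a i - d₁ * (∑ j ∈ Finset.Iio i, 1 / a j) - d₂ with hHdef
  set S : Fin n → ℝ := fun i => ∑ j ∈ Finset.Iio i, 1 / a j with hSdef
  have hH' : ∀ (i : Fin n) (y : ℝ), H i y = (y + d₂) / a i - d₁ * S i - d₂ := fun _ _ => rfl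
  clear_value H S
  have ha0 : ∀ i, 0 < a i := fun i => lt_trans one_pos (ha i)
  have hSnn : ∀ i, 0 ≤ S i := by
    intro i
    simp only [hSdef]
    exact Finset.sum_nonneg fun j _ => div_nonneg zero_le_one (ha0 j).le
  have hS1 : ∀ i : Fin n, S i + 1 / a i ≤ 1 := by
    intro i
    calc S i + 1 / a i = ∑ k ∈ insert i (Finset.Iio i), 1 / a k := by
          rw [Finset.sum_insert (by simp)]; simp only [hSdef]; ring
      _ ≤ ∑ k, 1 / a k := Finset.sum_le_sum_of_subset_of_nonneg (Finset.subset_univ _)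
          (fun k _ _ => div_nonneg zero_le_one (ha0 k).le)
      _ = 1 := hsum
  have hmono : ∀ i j : Fin n, i < j → S i + 1 / a i ≤ S j := by
    intro i j hij
    have hins : insert i (Finset.Iio i) ⊆ Finset.Iio j := by
      intro k hk
      simp only [Finset.mem_insert, Finset.mem_Iio] at *
      rcases hk with rfl | hk
      · exact hij
      · exact hk.trans hij
    calc S i + 1 / a i = ∑ k ∈ insert i (Finset.Iio i), 1 / a k := by
          rw [Finset.sum_insert (by simp)]; simp only [hSdef]; ring
      _ ≤ S j := by
          simp only [hSdef]
          exact Finset.sum_le_sum_of_subset_of_nonneg hins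
            (fun k _ _ => div_nonneg zero_le_one (ha0 k).le)
  -- H i maps the big open interval into its own small interval
  have hmem : ∀ (i : Fin n) (y : ℝ), y ∈ Set.Ioo (-d₁ - d₂) (-d₂) →
      H i y ∈ Set.Ioo (-d₁ * (S i + 1 / a i) - d₂) (-d₁ * S i - d₂) := by
    intro i y hy
    obtain ⟨hy1, hy2⟩ := hy
    have h1 : (y + d₂) / a i < 0 := div_neg_of_neg_of_pos (by linarith) (ha0 i)
    have h2 : -d₁ / a i < (y + d₂) / a i := by
      rw [div_lt_div_iff₀ (ha0 i) (ha0 i)]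
      nlinarith [ha0 i]
    rw [Set.mem_Ioo, hH']
    have hb1 : d₁ * (S i + 1 / a i) = d₁ * S i + d₁ / a i := by ring
    have hb2 : -d₁ / a i = -(d₁ / a i) := by ring
    constructor
    · linarith
    · linarith
  -- small intervals are inside the big interval
  have hsub : ∀ i : Fin n,
      Set.Ioo (-d₁ * (S i + 1 / a i) - d₂) (-d₁ * S i - d₂) ⊆ Set.Ioo (-d₁ - d₂) (-d₂) := by
    intro i t ht
    obtain ⟨ht1, ht2⟩ := ht
    constructor
    · have h4 : d₁ * (S i + 1 / a i) ≤ d₁ * 1 := mul_le_mul_of_nonneg_left (hS1 i) hd₁.le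
      nlinarith
    · have h5 : 0 ≤ d₁ * S i := mul_nonneg hd₁.le (hSnn i)
      nlinarith
  -- compositions preserve the big interval
  have hfoldmem : ∀ (v : List (Fin n)) (y : ℝ), y ∈ Set.Ioo (-d₁ - d₂) (-d₂) →
      v.foldr H y ∈ Set.Ioo (-d₁ - d₂) (-d₂) := by
    intro v
    induction v with
    | nil => intro y hy; simpa using hy
    | cons i u ih =>
      intro y hy
      simp only [List.foldr_cons]
      exact hsub i (hmem i _ (ih y hy))
  -- subtraction under H
  have hHsub : ∀ (i : Fin n) (A B : ℝ), H i A - H i B = (A - B) / a i := by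
    intro i A B
    rw [hH', hH']
    ring
  -- slope of compositions
  have hslope : ∀ (v : List (Fin n)) (y y' : ℝ),
      v.foldr H y - v.foldr H y'
        = ((v.map fun i => 1 / a i).prod) * (y - y') := by
    intro v
    induction v with
    | nil => simp
    | cons i u ih =>
      intro y y'
      simp only [List.foldr_cons, List.map_cons, List.prod_cons]
      rw [hHsub, ih y y', div_eq_mul_inv, one_div]
      ring
  have hprodpos : ∀ v : List (Fin n), 0 < ((v.map fun i => 1 / a i).prod) := by
    intro v
    apply List.prod_pos
    intro x hx
    simp only [List.mem_map] at hx
    obtain ⟨i, _, rfl⟩ := hx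
    exact div_pos one_pos (ha0 i)
  have hprodlt : ∀ (i : Fin n) (u : List (Fin n)),
      (((i :: u).map fun i => 1 / a i).prod) < 1 := by
    intro i u
    induction u with
    | nil => simpa using (div_lt_one (ha0 i)).mpr (ha i)
    | cons j u ih =>
      have h1 : ((List.map (fun i => 1 / a i) (i :: u)).prod) < 1 := ih
      have h2 : 0 < 1 / a j := div_pos one_pos (ha0 j)
      have h3 : 1 / a j < 1 := (div_lt_one (ha0 j)).mpr (ha j)
      have h0 : 0 < ((List.map (fun i => 1 / a i) (i :: u)).prod) := hprodpos _
      simp only [List.map_cons, List.prod_cons] at *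
      nlinarith
  -- injectivity of each H i
  have hHinj : ∀ (i : Fin n) (A B : ℝ), H i A = H i B → A = B := by
    intro i A B hAB
    have hs := hHsub i A B
    rw [hAB, sub_self] at hs
    rcases div_eq_zero_iff.mp hs.symm with h | h
    · linarith
    · exact absurd h (ha0 i).ne' 
  -- main induction
  intro v
  induction v with
  | nil =>
    intro v' h
    cases v' with
    | nil => rfl
    | cons j u =>
      exfalso
      have h0 := h 0
      have h1 := h 1
      simp only [List.foldr_nil] at h0 h1
      have hs := hslope (j :: u) 1 0
      rw [← h1, ← h0] at hs
      have he : ((List.map (fun i => 1 / a i) (j :: u)).prod) * ((1:ℝ) - 0)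
          = ((List.map (fun i => 1 / a i) (j :: u)).prod) := by ring
      linarith [hprodlt j u]
  | cons i u ih =>
    intro v' h
    cases v' with
    | nil =>
      exfalso
      have h0 := h 0
      have h1 := h 1
      simp only [List.foldr_nil] at h0 h1
      have hs := hslope (i :: u) 1 0
      rw [h1, h0] at hs
      have he : ((List.map (fun i => 1 / a i) (i :: u)).prod) * ((1:ℝ) - 0)
          = ((List.map (fun i => 1 / a i) (i :: u)).prod) := by ring
      linarith [hprodlt i u]
    | cons j v'' =>
      by_cases hij : i = j
      · subst hij
        have huv : u = v'' := by
          apply ih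
          intro y
          have := h y
          simp only [List.foldr_cons] at this
          exact hHinj i _ _ this
        rw [huv]
      · exfalso
        set y₀ : ℝ := -d₂ - d₁ / 2 with hy₀
        have hy₀mem : y₀ ∈ Set.Ioo (-d₁ - d₂) (-d₂) := by
          constructor <;> simp only [hy₀] <;> linarith
        have hA := hfoldmem u y₀ hy₀mem
        have hB := hfoldmem v'' y₀ hy₀mem
        have hiA := hmem i _ hA
        have hjB := hmem j _ hB
        have heq := h y₀
        simp only [List.foldr_cons] at heq
        rw [heq] at hiA
        rcases lt_or_gt_of_ne hij with hlt | hlt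
        · have hkey : S i + 1 / a i ≤ S j := hmono i j hlt
          have h1 : -d₁ * S j ≤ -d₁ * (S i + 1 / a i) := by nlinarith
          obtain ⟨hiA1, _⟩ := hiA
          obtain ⟨_, hjB2⟩ := hjB
          linarith
        · have hkey : S j + 1 / a j ≤ S i := hmono j i hlt
          have h1 : -d₁ * S i ≤ -d₁ * (S j + 1 / a j) := by nlinarith
          obtain ⟨_, hiA2⟩ := hiA
          obtain ⟨hjB1, _⟩ := hjB
          linarith

theorem stmt_11 (n : ℕ) (a : Fin n → ℝ) (ha : ∀ i, 1 < a i)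
    (hsum : ∑ i, 1 / a i = 1) (d₁ d₂ : ℝ) (hd₁ : 0 < d₁) :
    ∀ w w' : List (Fin n), w ≠ [] → w' ≠ [] → w ≠ w' →
      (fun y => w.foldr
        (fun i z => a i * z + d₁ * a i * (∑ j ∈ Finset.Iio i, 1 / a j) +
          d₂ * (a i - 1)) y) ≠
      (fun y => w'.foldr
        (fun i z => a i * z + d₁ * a i * (∑ j ∈ Finset.Iio i, 1 / a j) +
          d₂ * (a i - 1)) y) := by
  intro w w' hw hw' hne heq
  set F : Fin n → ℝ → ℝ := fun i z => a i * z + d₁ * a i * (∑ j ∈ Finset.Iio i, 1 / a j) +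
          d₂ * (a i - 1) with hFdef
  set H : Fin n → ℝ → ℝ :=
    fun i y => (y + d₂) / a i - d₁ * (∑ j ∈ Finset.Iio i, 1 / a j) - d₂ with hHdef
  have ha0 : ∀ i, 0 < a i := fun i => lt_trans one_pos (ha i)
  have hFH : ∀ (i : Fin n) (y : ℝ), F i (H i y) = y := by
    intro i y
    simp only [hFdef, hHdef]
    have hane : a i ≠ 0 := (ha0 i).ne'
    field_simp
    ring
  have hslopeF : ∀ (v : List (Fin n)) (y y' : ℝ),
      v.foldr F y - v.foldr F y' = ((v.map a).prod) * (y - y') := by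
    intro v
    induction v with
    | nil => simp
    | cons i u ih =>
      intro y y'
      simp only [List.foldr_cons, List.map_cons, List.prod_cons, hFdef]
      linear_combination a i * ih y y'
  have hinjF : ∀ v : List (Fin n), Function.Injective (fun y => v.foldr F y) := by
    intro v y y' hyy'
    have hs := hslopeF v y y'
    simp only at hyy'
    rw [hyy'] at hs
    have hp : 0 < (v.map a).prod := by
      apply List.prod_pos
      intro x hx
      simp only [List.mem_map] at hx
      obtain ⟨i, _, rfl⟩ := hx
      exact ha0 i
    have : (v.map a).prod * (y - y') = 0 := by linarith
    rcases mul_eq_zero.mp this with h | h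
    · exact absurd h hp.ne'
    · linarith
  have hinvF : ∀ (v : List (Fin n)) (y : ℝ),
      v.foldr F (v.foldl (fun y i => H i y) y) = y := by
    intro v
    induction v with
    | nil => simp
    | cons i u ih =>
      intro y
      simp only [List.foldl_cons, List.foldr_cons]
      rw [ih (H i y)]
      exact hFH i y
  have hXeq : ∀ y : ℝ, w.foldl (fun y i => H i y) y = w'.foldl (fun y i => H i y) y := by
    intro y
    apply hinjF w'
    show w'.foldr F (w.foldl (fun y i => H i y) y) = w'.foldr F (w'.foldl (fun y i => H i y) y)
    rw [hinvF w' y]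
    have h1 : (fun t => w.foldr F t) = (fun t => w'.foldr F t) := heq
    calc w'.foldr F (w.foldl (fun y i => H i y) y)
        = w.foldr F (w.foldl (fun y i => H i y) y) := (congrFun h1 _).symm
      _ = y := hinvF w y
  have hrev : w.reverse = w'.reverse := by
    apply free_key_aux n a ha hsum d₁ d₂ hd₁
    intro y
    have h1 : (w.reverse).foldr (fun i y => H i y) y = w.foldl (fun y i => H i y) y :=
      List.foldr_reverse (l := w) (f := fun i y => H i y) (b := y)
    have h2 : (w'.reverse).foldr (fun i y => H i y) y = w'.foldl (fun y i => H i y) y :=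
      List.foldr_reverse (l := w') (f := fun i y => H i y) (b := y)
    simp only [hHdef] at h1 h2
    rw [h1, h2]
    have := hXeq y
    simp only [hHdef] at this
    exact this
  exact hne (by rw [← List.reverse_reverse w, hrev, List.reverse_reverse])
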